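/- For every β > 0 there is a constant C = C(β) > 0 such that for all a > 0 and b ∈ ℝ: (i) if 0 < β ≤ 1 then ||a+b|^β − a^β| ≤ C min{|b|^β, a^{β−1}|b|}; (ii) if 1 < β ≤ 2 then ||a+b|^{β−1}(a+b) − a^β − β a^{β−1} b| ≤ C min{|b|^β, a^{β−2} b²}; (iii) if 2 < β ≤ 3 then ||a+b|^β − a^β − β a^{β−1} b − (1/2)β(β−1) a^{β−2} b²| ≤ C min{|b|^β, a^{β−3}|b|³}. -/
import Mathlib

open Real Set

namespace Stmt10Aux

lemma L1 {γ t : ℝ} (hγ0 : 0 < γ) (hγ1 : γ ≤ 1) (ht : |t| ≤ 1/2) :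
    |(1+t)^γ - 1| ≤ 2*|t| := by
  have habs := abs_le.1 ht
  have key : ∀ x ∈ Icc (-(1/2):ℝ) (1/2),
      HasDerivWithinAt (fun u : ℝ => (1+u)^γ) (γ*(1+x)^(γ-1)*1) (Icc (-(1/2):ℝ) (1/2)) x := by
    intro x hx
    have hxpos : (0:ℝ) < 1 + x := by
      have := hx.1; linarith
    exact ((Real.hasDerivAt_rpow_const (p := γ) (Or.inl hxpos.ne')).comp x
      ((hasDerivAt_id x).const_add 1)).hasDerivWithinAt
  have bound : ∀ x ∈ Icc (-(1/2):ℝ) (1/2), ‖γ*(1+x)^(γ-1)*1‖ ≤ 2 := by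
    intro x hx
    have hxpos : (0:ℝ) < 1 + x := by have := hx.1; linarith
    have h1 : (1+x)^(γ-1) ≤ ((1:ℝ)/2)^(γ-1) := by
      apply Real.rpow_le_rpow_of_nonpos (by norm_num) (by linarith [hx.1]) (by linarith)
    have h2 : ((1:ℝ)/2)^(γ-1) = 2^(1-γ) := by
      rw [one_div, Real.inv_rpow (by norm_num), ← Real.rpow_neg (by norm_num)]
      ring_nf
    have h3 : (2:ℝ)^(1-γ) ≤ 2^(1:ℝ) := by
      apply Real.rpow_le_rpow_of_exponent_le (by norm_num) (by linarith)
    have h4 : (2:ℝ)^(1:ℝ) = 2 := Real.rpow_one 2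
    have hpos : 0 ≤ γ*(1+x)^(γ-1)*1 := by
      positivity
    rw [Real.norm_eq_abs, abs_of_nonneg hpos]
    nlinarith [Real.rpow_nonneg hxpos.le (γ-1)]
  have := (convex_Icc (-(1/2):ℝ) (1/2)).norm_image_sub_le_of_norm_hasDerivWithin_le
    key bound (x := 0) (y := t) (by constructor <;> norm_num) (by constructor <;> linarith)
  simpa [Real.rpow_natCast] using this

lemma L2 {β t : ℝ} (hβ1 : 1 < β) (hβ2 : β ≤ 2) (ht : |t| ≤ 1/2) :
    |(1+t)^β - 1 - β*t| ≤ 4*t^2 := by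
  have habs := abs_le.1 ht
  have htt : (0:ℝ) ≤ |t| := abs_nonneg t
  set s : Set ℝ := Icc (-|t|) |t| with hs
  have hsub : ∀ x ∈ s, |x| ≤ 1/2 := by
    intro x hx; rw [abs_le]; exact ⟨by linarith [hx.1], by linarith [hx.2]⟩
  have key : ∀ x ∈ s, HasDerivWithinAt (fun u : ℝ => (1+u)^β - β*u)
      (β*(1+x)^(β-1)*1 - β) s x := by
    intro x hx
    have hxpos : (0:ℝ) < 1 + x := by
      have := (abs_le.1 (hsub x hx)).1; linarith
    exact (((Real.hasDerivAt_rpow_const (p := β) (Or.inl hxpos.ne')).comp x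
      ((hasDerivAt_id x).const_add 1)).sub ((hasDerivAt_id x).const_mul β)).hasDerivWithinAt.congr_deriv (by ring)
  have bound : ∀ x ∈ s, ‖β*(1+x)^(β-1)*1 - β‖ ≤ 4*|t| := by
    intro x hx
    have h1 : |(1+x)^(β-1) - 1| ≤ 2*|x| := L1 (by linarith) (by linarith) (hsub x hx)
    have hxle : |x| ≤ |t| := abs_le.2 ⟨hx.1, hx.2⟩
    rw [Real.norm_eq_abs]
    have : β*(1+x)^(β-1)*1 - β = β * ((1+x)^(β-1) - 1) := by ring
    rw [this, abs_mul, abs_of_pos (by linarith : (0:ℝ) < β)]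
    nlinarith [abs_nonneg x]
  have h := (convex_Icc (-|t|) |t|).norm_image_sub_le_of_norm_hasDerivWithin_le
    key bound (x := 0) (y := t) (by constructor <;> linarith) (by
      constructor
      · exact neg_abs_le t
      · exact le_abs_self t)
  simp only [Real.norm_eq_abs, sub_zero, mul_zero] at h
  calc |(1+t)^β - 1 - β*t| = |(1+t)^β - β*t - (1+0:ℝ)^β| := by
        rw [show ((1:ℝ)+0) = 1 by norm_num, Real.one_rpow]; ring_nf
    _ ≤ 4*|t| * |t| := h
    _ = 4*t^2 := by rw [mul_assoc, abs_mul_abs_self t, sq]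

lemma L3 {β t : ℝ} (hβ1 : 2 < β) (hβ2 : β ≤ 3) (ht : |t| ≤ 1/2) :
    |(1+t)^β - 1 - β*t - β*(β-1)/2*t^2| ≤ 12*|t|^3 := by
  have habs := abs_le.1 ht
  have htt : (0:ℝ) ≤ |t| := abs_nonneg t
  set s : Set ℝ := Icc (-|t|) |t| with hs
  have hsub : ∀ x ∈ s, |x| ≤ 1/2 := by
    intro x hx; rw [abs_le]; exact ⟨by linarith [hx.1], by linarith [hx.2]⟩
  have key : ∀ x ∈ s, HasDerivWithinAt (fun u : ℝ => (1+u)^β - β*u - β*(β-1)/2*u^2)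
      (β*((1+x)^(β-1) - 1 - (β-1)*x)) s x := by
    intro x hx
    have hxpos : (0:ℝ) < 1 + x := by
      have := (abs_le.1 (hsub x hx)).1; linarith
    exact ((((Real.hasDerivAt_rpow_const (p := β) (Or.inl hxpos.ne')).comp x
      ((hasDerivAt_id x).const_add 1)).sub ((hasDerivAt_id x).const_mul β)).sub
      (((hasDerivAt_pow 2 x)).const_mul (β*(β-1)/2))).hasDerivWithinAt.congr_deriv (by ring)
  have bound : ∀ x ∈ s, ‖β*((1+x)^(β-1) - 1 - (β-1)*x)‖ ≤ 12*t^2 := by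
    intro x hx
    have h1 : |(1+x)^(β-1) - 1 - (β-1)*x| ≤ 4*x^2 :=
      L2 (by linarith) (by linarith) (hsub x hx)
    have hxle : |x| ≤ |t| := abs_le.2 ⟨hx.1, hx.2⟩
    have hx2 : x^2 ≤ t^2 := by
      rw [← sq_abs x, ← sq_abs t]; exact pow_le_pow_left₀ (abs_nonneg x) hxle 2
    rw [Real.norm_eq_abs, abs_mul, abs_of_pos (by linarith : (0:ℝ) < β)]
    nlinarith [sq_nonneg x]
  have h := (convex_Icc (-|t|) |t|).norm_image_sub_le_of_norm_hasDerivWithin_le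
    key bound (x := 0) (y := t) (by constructor <;> linarith)
    ⟨neg_abs_le t, le_abs_self t⟩
  simp only [Real.norm_eq_abs, sub_zero] at h
  calc |(1+t)^β - 1 - β*t - β*(β-1)/2*t^2|
      = |(1+t)^β - β*t - β*(β-1)/2*t^2 - ((1+0:ℝ)^β - β*0 - β*(β-1)/2*0^2)| := by
        rw [show ((1:ℝ)+0) = 1 by norm_num, Real.one_rpow]; ring_nf
    _ ≤ 12*t^2 * |t| := h
    _ = 12*|t|^3 := by rw [← sq_abs t]; ring

lemma Lcmp {p q t : ℝ} (hp : 0 ≤ p) (hpq : p ≤ q) (hq : q ≤ 3) (ht : 1/2 ≤ |t|) :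
    |t|^p ≤ 8*|t|^q := by
  have htt : (0:ℝ) ≤ |t| := abs_nonneg t
  have h2t : (1:ℝ) ≤ 2*|t| := by linarith
  have h1 : (2*|t|)^p ≤ (2*|t|)^q := Real.rpow_le_rpow_of_exponent_le h2t hpq
  rw [Real.mul_rpow (by norm_num) htt, Real.mul_rpow (by norm_num) htt] at h1
  have h2 : (1:ℝ) ≤ 2^p := Real.one_le_rpow (by norm_num) hp
  have h3 : (2:ℝ)^q ≤ 8 := by
    calc (2:ℝ)^q ≤ 2^(3:ℝ) := Real.rpow_le_rpow_of_exponent_le (by norm_num) hq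
      _ = 8 := by rw [show (3:ℝ) = ((3:ℕ):ℝ) by norm_num, Real.rpow_natCast]; norm_num
  have h4 : (0:ℝ) ≤ |t|^q := Real.rpow_nonneg htt q
  have h5 : (0:ℝ) ≤ |t|^p := Real.rpow_nonneg htt p
  nlinarith

lemma Lbase {β t : ℝ} (hβ : 0 < β) (hβ3 : β ≤ 3) (ht : 1/2 ≤ |t|) :
    |1+t|^β ≤ 27*|t|^β := by
  have htt : (0:ℝ) ≤ |t| := abs_nonneg t
  calc |1+t|^β ≤ (3*|t|)^β := by
        apply Real.rpow_le_rpow (abs_nonneg _) _ hβ.le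
        calc |1+t| ≤ 1 + |t| := by simpa using abs_add_le 1 t
          _ ≤ 3*|t| := by linarith
    _ = 3^β * |t|^β := Real.mul_rpow (by norm_num) htt
    _ ≤ 27*|t|^β := by
        have h3 : (3:ℝ)^β ≤ 27 := by
          calc (3:ℝ)^β ≤ 3^(3:ℝ) := Real.rpow_le_rpow_of_exponent_le (by norm_num) hβ3
            _ = 27 := by rw [show (3:ℝ) = ((3:ℕ):ℝ) by norm_num, Real.rpow_natCast]; norm_num
        have := Real.rpow_nonneg htt β
        nlinarith

lemma Lsmallp {p q t : ℝ} (hp : 0 < p) (hpq : p ≤ q) (ht : |t| ≤ 1) :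
    |t|^q ≤ |t|^p := by
  rcases eq_or_ne t 0 with rfl | h0
  · simp only [abs_zero]
    rw [Real.zero_rpow (by linarith : q ≠ 0), Real.zero_rpow hp.ne']
  · exact Real.rpow_le_rpow_of_exponent_ge (abs_pos.2 h0) ht hpq

lemma rpow_one' (t : ℝ) : |t|^(1:ℝ) = |t| := Real.rpow_one _
lemma rpow_two' (t : ℝ) : |t|^(2:ℝ) = t^2 := by
  rw [show (2:ℝ) = ((2:ℕ):ℝ) by norm_num, Real.rpow_natCast, sq_abs]
lemma rpow_three' (t : ℝ) : |t|^(3:ℝ) = |t|^3 := by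
  rw [show (3:ℝ) = ((3:ℕ):ℝ) by norm_num, Real.rpow_natCast]
lemma rpow_zero' (t : ℝ) : |t|^(0:ℝ) = 1 := Real.rpow_zero _

lemma S1 {β t : ℝ} (hβ0 : 0 < β) (hβ1 : β ≤ 1) :
    abs (|1+t|^β - 1) ≤ 1000 * min (|t|^β) |t| := by
  rw [mul_min_of_nonneg _ _ (by norm_num : (0:ℝ) ≤ 1000)]
  have h0t : (0:ℝ) ≤ |t| := abs_nonneg t
  have h0t2 : (0:ℝ) ≤ t^2 := sq_nonneg t
  have h0tb : (0:ℝ) ≤ |t|^β := Real.rpow_nonneg (abs_nonneg t) β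
  have h0t3 : (0:ℝ) ≤ |t|^3 := by positivity
  rcases le_or_gt (|t|) (1/2) with ht | ht
  · have h := L1 hβ0 hβ1 ht
    have habs : |1+t| = 1+t := abs_of_pos (by have := abs_le.1 ht; linarith [this.1])
    rw [habs]
    refine le_min ?_ (by linarith)
    have : |t| ≤ |t|^β := by
      have := Lsmallp (t:=t) hβ0 hβ1 (by linarith)
      rwa [rpow_one'] at this
    linarith
  · have h1 : |1+t|^β ≤ 27*|t|^β := Lbase hβ0 (by linarith) ht.le
    have h2 : (1:ℝ) ≤ 8*|t|^β := by
      have := Lcmp (le_refl 0) hβ0.le (by linarith) ht.le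
      rwa [rpow_zero'] at this
    have h3 : |t|^β ≤ 8*|t| := by
      have := Lcmp hβ0.le hβ1 (by norm_num) ht.le
      rwa [rpow_one'] at this
    have h0 : (0:ℝ) ≤ |1+t|^β := Real.rpow_nonneg (abs_nonneg _) β
    have hA : abs (|1+t|^β - 1) ≤ 35*|t|^β := by
      rw [abs_le]; constructor <;> nlinarith
    refine le_min (by linarith) ?_
    nlinarith

lemma S2 {β t : ℝ} (hβ1 : 1 < β) (hβ2 : β ≤ 2) :
    abs (|1+t|^(β-1)*(1+t) - 1 - β*t) ≤ 1000 * min (|t|^β) (t^2) := by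
  rw [mul_min_of_nonneg _ _ (by norm_num : (0:ℝ) ≤ 1000)]
  have h0t : (0:ℝ) ≤ |t| := abs_nonneg t
  have h0t2 : (0:ℝ) ≤ t^2 := sq_nonneg t
  have h0tb : (0:ℝ) ≤ |t|^β := Real.rpow_nonneg (abs_nonneg t) β
  have h0t3 : (0:ℝ) ≤ |t|^3 := by positivity
  have hβ0 : 0 < β := by linarith
  rcases le_or_gt (|t|) (1/2) with ht | ht
  · have hpos : (0:ℝ) < 1+t := by have := abs_le.1 ht; linarith [this.1]
    have habs : |1+t| = 1+t := abs_of_pos hpos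
    have hrw : |1+t|^(β-1)*(1+t) = (1+t)^β := by
      rw [habs, ← Real.rpow_add_one hpos.ne']; ring_nf
    rw [hrw]
    have h := L2 hβ1 hβ2 ht
    refine le_min ?_ (by linarith)
    have ht2 : t^2 ≤ |t|^β := by
      have := Lsmallp (t:=t) hβ0 hβ2 (by linarith)
      rwa [rpow_two'] at this
    linarith
  · have hg : abs (|1+t|^(β-1)*(1+t)) = |1+t|^β := by
      rcases eq_or_ne (1+t) 0 with h0 | h0
      · rw [h0]; simp [Real.zero_rpow hβ0.ne']
      · rw [abs_mul, abs_of_nonneg (Real.rpow_nonneg (abs_nonneg _) _),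
          ← Real.rpow_add_one (abs_ne_zero.2 h0)]
        ring_nf
    have h1 : |1+t|^β ≤ 27*|t|^β := Lbase hβ0 (by linarith) ht.le
    have h2 : (1:ℝ) ≤ 8*|t|^β := by
      have := Lcmp (le_refl 0) hβ0.le (by linarith) ht.le
      rwa [rpow_zero'] at this
    have h3 : |t| ≤ 8*|t|^β := by
      have := Lcmp (by norm_num : (0:ℝ) ≤ 1) hβ1.le (by linarith) ht.le
      rwa [rpow_one'] at this
    have h4 : |t|^β ≤ 8*t^2 := by
      have := Lcmp hβ0.le hβ2 (by norm_num) ht.le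
      rwa [rpow_two'] at this
    have hbt : |β*t| ≤ 2*|t| := by
      rw [abs_mul, abs_of_pos hβ0]; nlinarith [abs_nonneg t]
    have h0 : (0:ℝ) ≤ |1+t|^β := Real.rpow_nonneg (abs_nonneg _) β
    have hA : abs (|1+t|^(β-1)*(1+t) - 1 - β*t) ≤ 51*|t|^β := by
      calc abs (|1+t|^(β-1)*(1+t) - 1 - β*t) ≤ abs (|1+t|^(β-1)*(1+t)) + 1 + |β*t| := by
            have a1 := le_abs_self (|1+t|^(β-1)*(1+t))
            have a2 := neg_abs_le (|1+t|^(β-1)*(1+t))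
            have a3 := le_abs_self (β*t)
            have a4 := neg_abs_le (β*t)
            rw [abs_le]; constructor <;> linarith
        _ = |1+t|^β + 1 + |β*t| := by rw [hg]
        _ ≤ 27*|t|^β + 8*|t|^β + 2*(8*|t|^β) := by nlinarith [abs_nonneg t]
        _ = 51*|t|^β := by ring
    refine le_min (by linarith) ?_
    nlinarith

lemma S3 {β t : ℝ} (hβ1 : 2 < β) (hβ2 : β ≤ 3) :
    abs (|1+t|^β - 1 - β*t - β*(β-1)/2*t^2) ≤ 1000 * min (|t|^β) (|t|^3) := by
  rw [mul_min_of_nonneg _ _ (by norm_num : (0:ℝ) ≤ 1000)]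
  have h0t : (0:ℝ) ≤ |t| := abs_nonneg t
  have h0t2 : (0:ℝ) ≤ t^2 := sq_nonneg t
  have h0tb : (0:ℝ) ≤ |t|^β := Real.rpow_nonneg (abs_nonneg t) β
  have h0t3 : (0:ℝ) ≤ |t|^3 := by positivity
  have hβ0 : 0 < β := by linarith
  rcases le_or_gt (|t|) (1/2) with ht | ht
  · have hpos : (0:ℝ) < 1+t := by have := abs_le.1 ht; linarith [this.1]
    rw [abs_of_pos hpos]
    have h := L3 hβ1 hβ2 ht
    refine le_min ?_ (by linarith)
    have ht3 : |t|^3 ≤ |t|^β := by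
      have := Lsmallp (t:=t) hβ0 hβ2 (by linarith)
      rwa [rpow_three'] at this
    linarith
  · have h1 : |1+t|^β ≤ 27*|t|^β := Lbase hβ0 hβ2 ht.le
    have h2 : (1:ℝ) ≤ 8*|t|^β := by
      have := Lcmp (le_refl 0) hβ0.le hβ2 ht.le
      rwa [rpow_zero'] at this
    have h3 : |t| ≤ 8*|t|^β := by
      have := Lcmp (by norm_num : (0:ℝ) ≤ 1) (by linarith) hβ2 ht.le
      rwa [rpow_one'] at this
    have h4 : t^2 ≤ 8*|t|^β := by
      have := Lcmp (by norm_num : (0:ℝ) ≤ 2) hβ1.le hβ2 ht.le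
      rwa [rpow_two'] at this
    have h5 : |t|^β ≤ 8*|t|^3 := by
      have := Lcmp hβ0.le hβ2 (le_refl 3) ht.le
      rwa [rpow_three'] at this
    have h0 : (0:ℝ) ≤ |1+t|^β := Real.rpow_nonneg (abs_nonneg _) β
    have hbt : |β*t| ≤ 3*|t| := by
      rw [abs_mul, abs_of_pos hβ0]; nlinarith [abs_nonneg t]
    have hct : |β*(β-1)/2*t^2| ≤ 3*t^2 := by
      rw [abs_mul, abs_of_nonneg (by nlinarith : (0:ℝ) ≤ β*(β-1)/2), abs_of_nonneg (sq_nonneg t)]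
      have hc : β*(β-1)/2 ≤ 3 := by nlinarith
      nlinarith [mul_le_mul_of_nonneg_right hc h0t2]
    have hA : abs (|1+t|^β - 1 - β*t - β*(β-1)/2*t^2) ≤ 83*|t|^β := by
      have t1 : abs (|1+t|^β - 1 - β*t - β*(β-1)/2*t^2) ≤ |1+t|^β + 1 + |β*t| + |β*(β-1)/2*t^2| := by
        have a1 := le_abs_self (|1+t|^β)
        have a2 := neg_abs_le (|1+t|^β)
        have a3 := le_abs_self (β*t)
        have a4 := neg_abs_le (β*t)
        have a5 := le_abs_self (β*(β-1)/2*t^2)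
        have a6 := neg_abs_le (β*(β-1)/2*t^2)
        have a7 : |(|1+t|^β)| = |1+t|^β := abs_of_nonneg h0
        rw [abs_le]; constructor <;> linarith
      nlinarith [abs_nonneg t]
    refine le_min (by linarith) ?_
    have ht3 : (0:ℝ) ≤ |t|^3 := by positivity
    nlinarith

end Stmt10Aux

open Stmt10Aux

theorem stmt10 (β : ℝ) (hβ : 0 < β) :
    ∃ C : ℝ, 0 < C ∧ ∀ a b : ℝ, 0 < a →
      ((β ≤ 1 →
          abs (|a + b| ^ β - a ^ β) ≤ C * min (|b| ^ β) (a ^ (β - 1) * |b|)) ∧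
        (1 < β → β ≤ 2 →
          abs (|a + b| ^ (β - 1) * (a + b) - a ^ β - β * a ^ (β - 1) * b) ≤
            C * min (|b| ^ β) (a ^ (β - 2) * b ^ 2)) ∧
        (2 < β → β ≤ 3 →
          abs (|a + b| ^ β - a ^ β - β * a ^ (β - 1) * b -
              (1 / 2) * β * (β - 1) * a ^ (β - 2) * b ^ 2) ≤
            C * min (|b| ^ β) (a ^ (β - 3) * |b| ^ 3))) := by
  refine ⟨1000, by norm_num, fun a b ha => ?_⟩
  set t : ℝ := b / a with htdef
  have hb : b = a * t := by rw [htdef, mul_comm, div_mul_cancel₀ _ ha.ne']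
  have hapos : (0:ℝ) ≤ a := ha.le
  have haβ : (0:ℝ) < a ^ β := Real.rpow_pos_of_pos ha β
  have hab : a + b = a * (1 + t) := by rw [hb]; ring
  have habs : |a + b| = a * |1 + t| := by
    rw [hab, abs_mul, abs_of_pos ha]
  have hpowβ : |a + b| ^ β = a ^ β * |1 + t| ^ β := by
    rw [habs, Real.mul_rpow hapos (abs_nonneg _)]
  have hbabs : |b| = a * |t| := by rw [hb, abs_mul, abs_of_pos ha]
  have hbβ : |b| ^ β = a ^ β * |t| ^ β := by
    rw [hbabs, Real.mul_rpow hapos (abs_nonneg _)]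
  have hstep1 : a ^ (β - 1) * a = a ^ β := by
    rw [← Real.rpow_add_one ha.ne' (β - 1)]; ring_nf
  have hstep2 : a ^ (β - 2) * a ^ (2:ℕ) = a ^ β := by
    rw [← Real.rpow_natCast a 2, ← Real.rpow_add ha]; norm_num
  have hstep3 : a ^ (β - 3) * a ^ (3:ℕ) = a ^ β := by
    rw [← Real.rpow_natCast a 3, ← Real.rpow_add ha]; norm_num
  refine ⟨fun hβ1 => ?_, fun hβ1 hβ2 => ?_, fun hβ1 hβ2 => ?_⟩
  · -- case (i)
    have e3 : a ^ (β - 1) * |b| = a ^ β * |t| := by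
      rw [hbabs, ← mul_assoc, hstep1]
    rw [hpowβ, hbβ, e3, ← mul_min_of_nonneg _ _ haβ.le]
    calc abs (a ^ β * |1 + t| ^ β - a ^ β)
        = a ^ β * abs (|1 + t| ^ β - 1) := by
          rw [show a ^ β * |1+t| ^ β - a ^ β = a ^ β * (|1+t| ^ β - 1) by ring,
            abs_mul, abs_of_pos haβ]
      _ ≤ a ^ β * (1000 * min (|t| ^ β) |t|) :=
          mul_le_mul_of_nonneg_left (S1 hβ hβ1) haβ.le
      _ = 1000 * (a ^ β * min (|t| ^ β) |t|) := by ring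
  · -- case (ii)
    have epow : |a + b| ^ (β - 1) * (a + b) = a ^ β * (|1 + t| ^ (β - 1) * (1 + t)) := by
      rw [habs, hab, Real.mul_rpow hapos (abs_nonneg _)]
      rw [← hstep1]; ring
    have eb : β * a ^ (β - 1) * b = a ^ β * (β * t) := by
      rw [hb, ← hstep1]; ring
    have e2 : a ^ (β - 2) * b ^ 2 = a ^ β * t ^ 2 := by
      rw [hb, ← hstep2]; ring
    rw [epow, eb, e2, hbβ, ← mul_min_of_nonneg _ _ haβ.le]
    calc abs (a ^ β * (|1 + t| ^ (β - 1) * (1 + t)) - a ^ β - a ^ β * (β * t))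
        = a ^ β * abs (|1 + t| ^ (β - 1) * (1 + t) - 1 - β * t) := by
          rw [show a ^ β * (|1+t| ^ (β-1) * (1+t)) - a ^ β - a ^ β * (β * t)
              = a ^ β * (|1+t| ^ (β-1) * (1+t) - 1 - β * t) by ring,
            abs_mul, abs_of_pos haβ]
      _ ≤ a ^ β * (1000 * min (|t| ^ β) (t ^ 2)) :=
          mul_le_mul_of_nonneg_left (S2 hβ1 hβ2) haβ.le
      _ = 1000 * (a ^ β * min (|t| ^ β) (t ^ 2)) := by ring
  · -- case (iii)
    have eb : β * a ^ (β - 1) * b = a ^ β * (β * t) := by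
      rw [hb, ← hstep1]; ring
    have e2 : (1/2) * β * (β - 1) * a ^ (β - 2) * b ^ 2 = a ^ β * (β * (β - 1) / 2 * t ^ 2) := by
      rw [hb, ← hstep2]; ring
    have e3 : a ^ (β - 3) * |b| ^ 3 = a ^ β * |t| ^ 3 := by
      rw [hbabs, ← hstep3]; ring
    rw [hpowβ, eb, e2, e3, hbβ, ← mul_min_of_nonneg _ _ haβ.le]
    calc abs (a ^ β * |1 + t| ^ β - a ^ β - a ^ β * (β * t) - a ^ β * (β * (β - 1) / 2 * t ^ 2))
        = a ^ β * abs (|1 + t| ^ β - 1 - β * t - β * (β - 1) / 2 * t ^ 2) := by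
          rw [show a ^ β * |1+t| ^ β - a ^ β - a ^ β * (β * t) - a ^ β * (β * (β-1) / 2 * t ^ 2)
              = a ^ β * (|1+t| ^ β - 1 - β * t - β * (β-1) / 2 * t ^ 2) by ring,
            abs_mul, abs_of_pos haβ]
      _ ≤ a ^ β * (1000 * min (|t| ^ β) (|t| ^ 3)) :=
          mul_le_mul_of_nonneg_left (S3 hβ1 hβ2) haβ.le
      _ = 1000 * (a ^ β * min (|t| ^ β) (|t| ^ 3)) := by ring
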